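/- Fix T>0. Suppose A, Σ, Λ : [0,T] → ℝ^{n×n} are differentiable, Σ_t and Λ_t are symmetric for all t, and for all t ∈ [0,T]: Σ̇_t = A_tΣ_t + Σ_tA_tᵀ, −Λ̇_t = Λ_tA_t + A_tᵀΛ_t, and A_t = Λ_tΣ_t. Let Ω := ½(A_0 − A_0ᵀ) and S_0 := ½(A_0 + A_0ᵀ). Then the symmetric part S_t := ½(A_t + A_tᵀ) satisfies Ṡ_t = 2(ΩS_t − S_tΩ), and A_t = exp(2tΩ) S_0 exp(−2tΩ) + Ω for all t ∈ [0,T], where exp denotes the matrix exponential. -/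

import Mathlib

open Matrix Set NormedSpace

lemma znc_hd_mul {n : ℕ} {s : Set ℝ} {t : ℝ} {P Q : ℝ → Matrix (Fin n) (Fin n) ℝ}
    {P' Q' : Matrix (Fin n) (Fin n) ℝ}
    (hP : ∀ i j, HasDerivWithinAt (fun u => P u i j) (P' i j) s t)
    (hQ : ∀ i j, HasDerivWithinAt (fun u => Q u i j) (Q' i j) s t) :
    ∀ i j, HasDerivWithinAt (fun u => (P u * Q u) i j) ((P' * Q t + P t * Q') i j) s t := by
  intro i j
  simp only [Matrix.mul_apply, Matrix.add_apply]
  rw [← Finset.sum_add_distrib]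
  exact HasDerivWithinAt.fun_sum fun k _ => (hP i k).mul (hQ k j)

lemma znc_const {T : ℝ} (hT : 0 < T) (f : ℝ → ℝ)
    (h : ∀ t ∈ Icc (0:ℝ) T, HasDerivWithinAt f 0 (Icc (0:ℝ) T) t) :
    ∀ t ∈ Icc (0:ℝ) T, f t = f 0 :=
  constant_of_derivWithin_zero (fun x hx => (h x hx).differentiableWithinAt)
    (fun x hx => (h x (Ico_subset_Icc_self hx)).derivWithin
      ((uniqueDiffOn_Icc hT) x (Ico_subset_Icc_self hx)))

lemma znc_entry_hasDerivAt {n : ℕ} {M : ℝ → Matrix (Fin n) (Fin n) ℝ}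
    {M' : Matrix (Fin n) (Fin n) ℝ} {u : ℝ}
    (h : letI := (Matrix.linftyOpNormedRing : NormedRing (Matrix (Fin n) (Fin n) ℝ));
         letI := (Matrix.linftyOpNormedAlgebra : NormedAlgebra ℝ (Matrix (Fin n) (Fin n) ℝ));
         HasDerivAt M M' u)
    (i j : Fin n) : HasDerivAt (fun v => M v i j) (M' i j) u := by
  letI := (Matrix.linftyOpNormedRing : NormedRing (Matrix (Fin n) (Fin n) ℝ))
  letI := (Matrix.linftyOpNormedAlgebra : NormedAlgebra ℝ (Matrix (Fin n) (Fin n) ℝ))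
  let l : Matrix (Fin n) (Fin n) ℝ →ₗ[ℝ] ℝ :=
    { toFun := fun M => M i j, map_add' := fun _ _ => rfl, map_smul' := fun _ _ => rfl }
  have hc : Continuous l := l.continuous_of_finiteDimensional
  exact (ContinuousLinearMap.hasFDerivAt ⟨l, hc⟩).comp_hasDerivAt u h

lemma znc_exp_deriv {n : ℕ} (W : Matrix (Fin n) (Fin n) ℝ) (c u : ℝ) (i j : Fin n) :
    HasDerivAt (fun v : ℝ => exp ((c * v) • W) i j) ((c • (exp ((c * u) • W) * W)) i j) u := by
  letI := (Matrix.linftyOpNormedRing : NormedRing (Matrix (Fin n) (Fin n) ℝ))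
  letI := (Matrix.linftyOpNormedAlgebra : NormedAlgebra ℝ (Matrix (Fin n) (Fin n) ℝ))
  have h1 : HasDerivAt (fun v : ℝ => exp (v • W)) (exp ((c * u) • W) * W) (c * u) :=
    hasDerivAt_exp_smul_const W (c * u)
  have h2 : HasDerivAt (fun v : ℝ => c * v) c u := by
    simpa using (hasDerivAt_id u).const_mul c
  have h3 : HasDerivAt (fun v : ℝ => exp ((c * v) • W)) (c • (exp ((c * u) • W) * W)) u :=
    HasDerivAt.scomp u h1 h2
  exact znc_entry_hasDerivAt h3 i j

lemma znc_exp_commute {n : ℕ} (W : Matrix (Fin n) (Fin n) ℝ) (u : ℝ) :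
    exp (u • W) * W = W * exp (u • W) := by
  letI := (Matrix.linftyOpNormedRing : NormedRing (Matrix (Fin n) (Fin n) ℝ))
  letI := (Matrix.linftyOpNormedAlgebra : NormedAlgebra ℝ (Matrix (Fin n) (Fin n) ℝ))
  exact (((Commute.refl W).smul_left u).exp_left).eq

/-- in the zero-noise spatial optimality system, the symmetric part
`S_t = ½(A_t + A_tᵀ)` satisfies `Ṡ = 2(ΩS − SΩ)` and hence
`A_t = exp(2tΩ) S_0 exp(−2tΩ) + Ω`, where `Ω = ½(A_0 − A_0ᵀ)`. -/
theorem zero_noise_control_closed_form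
    {n : ℕ} (T : ℝ) (hT : 0 < T)
    (A A' S S' Lam Lam' : ℝ → Matrix (Fin n) (Fin n) ℝ)
    (hSsymm : ∀ t ∈ Icc (0:ℝ) T, (S t).IsSymm)
    (hLamSymm : ∀ t ∈ Icc (0:ℝ) T, (Lam t).IsSymm)
    (hAderiv : ∀ t ∈ Icc (0:ℝ) T, ∀ i j,
      HasDerivWithinAt (fun s => A s i j) (A' t i j) (Icc (0:ℝ) T) t)
    (hSderiv : ∀ t ∈ Icc (0:ℝ) T, ∀ i j,
      HasDerivWithinAt (fun s => S s i j) (S' t i j) (Icc (0:ℝ) T) t)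
    (hLamDeriv : ∀ t ∈ Icc (0:ℝ) T, ∀ i j,
      HasDerivWithinAt (fun s => Lam s i j) (Lam' t i j) (Icc (0:ℝ) T) t)
    (hdyn : ∀ t ∈ Icc (0:ℝ) T, S' t = A t * S t + S t * (A t)ᵀ)
    (hadj : ∀ t ∈ Icc (0:ℝ) T, -(Lam' t) = Lam t * A t + (A t)ᵀ * Lam t)
    (hstat : ∀ t ∈ Icc (0:ℝ) T, A t = Lam t * S t) :
    (∀ t ∈ Icc (0:ℝ) T, ∀ i j,
      HasDerivWithinAt (fun s => ((1/2 : ℝ) • (A s + (A s)ᵀ)) i j)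
        (((2 : ℝ) •
          (((1/2 : ℝ) • (A 0 - (A 0)ᵀ)) * ((1/2 : ℝ) • (A t + (A t)ᵀ)) -
           ((1/2 : ℝ) • (A t + (A t)ᵀ)) * ((1/2 : ℝ) • (A 0 - (A 0)ᵀ)))) i j)
        (Icc (0:ℝ) T) t) ∧
    (∀ t ∈ Icc (0:ℝ) T,
      A t =
        exp ((2 * t) • ((1/2 : ℝ) • (A 0 - (A 0)ᵀ))) *
          ((1/2 : ℝ) • (A 0 + (A 0)ᵀ)) *
          exp ((-(2 * t)) • ((1/2 : ℝ) • (A 0 - (A 0)ᵀ))) +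
        (1/2 : ℝ) • (A 0 - (A 0)ᵀ)) := by
  have hUD := uniqueDiffOn_Icc hT
  -- derivative of A
  have hA'eq : ∀ t ∈ Icc (0:ℝ) T, A' t = A t * (A t)ᵀ - (A t)ᵀ * A t := by
    intro t ht
    have hmuld := znc_hd_mul (hLamDeriv t ht) (hSderiv t ht)
    have hAd2 : ∀ i j, HasDerivWithinAt (fun s => A s i j)
        ((Lam' t * S t + Lam t * S' t) i j) (Icc (0:ℝ) T) t := fun i j =>
      (hmuld i j).congr (fun y hy => by rw [hstat y hy]) (by rw [hstat t ht])
    have hAeq2 : A' t = Lam' t * S t + Lam t * S' t := by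
      ext i j
      rw [← (hAderiv t ht i j).derivWithin (hUD t ht), (hAd2 i j).derivWithin (hUD t ht)]
    rw [hAeq2, hdyn t ht,
      show Lam' t = -(Lam t * A t + (A t)ᵀ * Lam t) by rw [← hadj t ht, neg_neg],
      hstat t ht]
    noncomm_ring
  -- skew part is constant
  have hsymX : ∀ t, (A t * (A t)ᵀ - (A t)ᵀ * A t)ᵀ = A t * (A t)ᵀ - (A t)ᵀ * A t := by
    intro t; simp [Matrix.transpose_sub, Matrix.transpose_mul]
  have hKder : ∀ t ∈ Icc (0:ℝ) T, ∀ i j,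
      HasDerivWithinAt (fun s => (1/2:ℝ) * (A s i j - A s j i)) 0 (Icc (0:ℝ) T) t := by
    intro t ht i j
    have h := ((hAderiv t ht i j).sub (hAderiv t ht j i)).const_mul (1/2:ℝ)
    have hz : (1/2:ℝ) * (A' t i j - A' t j i) = 0 := by
      rw [hA'eq t ht]
      have he : (A t * (A t)ᵀ - (A t)ᵀ * A t) j i = (A t * (A t)ᵀ - (A t)ᵀ * A t) i j := by
        simpa using congrFun (congrFun (hsymX t) i) j
      rw [he, sub_self, mul_zero]
    rw [hz] at h; exact h
  have hKconst : ∀ t ∈ Icc (0:ℝ) T,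
      (1/2:ℝ) • (A t - (A t)ᵀ) = (1/2:ℝ) • (A 0 - (A 0)ᵀ) := by
    intro t ht
    ext i j
    have := znc_const hT (fun s => (1/2:ℝ) * (A s i j - A s j i))
      (fun u hu => hKder u hu i j) t ht
    simpa [Matrix.smul_apply, Matrix.sub_apply, Matrix.transpose_apply] using this
  -- part 1
  have part1 : ∀ t ∈ Icc (0:ℝ) T, ∀ i j,
      HasDerivWithinAt (fun s => ((1/2 : ℝ) • (A s + (A s)ᵀ)) i j)
        (((2 : ℝ) •
          (((1/2 : ℝ) • (A 0 - (A 0)ᵀ)) * ((1/2 : ℝ) • (A t + (A t)ᵀ)) -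
           ((1/2 : ℝ) • (A t + (A t)ᵀ)) * ((1/2 : ℝ) • (A 0 - (A 0)ᵀ)))) i j)
        (Icc (0:ℝ) T) t := by
    intro t ht i j
    have h := ((hAderiv t ht i j).add (hAderiv t ht j i)).const_mul (1/2:ℝ)
    have hmat : ((2 : ℝ) •
          (((1/2 : ℝ) • (A 0 - (A 0)ᵀ)) * ((1/2 : ℝ) • (A t + (A t)ᵀ)) -
           ((1/2 : ℝ) • (A t + (A t)ᵀ)) * ((1/2 : ℝ) • (A 0 - (A 0)ᵀ))))
        = (1/2:ℝ) • (A' t + (A' t)ᵀ) := by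
      rw [← hKconst t ht, hA'eq t ht]
      simp only [Matrix.transpose_sub, Matrix.transpose_mul, Matrix.transpose_transpose,
        smul_mul_assoc, mul_smul_comm, mul_add, add_mul, mul_sub, sub_mul,
        smul_smul, smul_add, smul_sub]
      module
    have hfun : (fun s => ((1/2:ℝ) • (A s + (A s)ᵀ)) i j)
        = fun s => (1/2:ℝ) * (A s i j + A s j i) := by
      funext s; simp [Matrix.smul_apply, Matrix.add_apply, Matrix.transpose_apply]
    have hval : ((2 : ℝ) •
          (((1/2 : ℝ) • (A 0 - (A 0)ᵀ)) * ((1/2 : ℝ) • (A t + (A t)ᵀ)) -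
           ((1/2 : ℝ) • (A t + (A t)ᵀ)) * ((1/2 : ℝ) • (A 0 - (A 0)ᵀ)))) i j
        = (1/2:ℝ) * (A' t i j + A' t j i) := by
      rw [hmat]; simp [Matrix.smul_apply, Matrix.add_apply, Matrix.transpose_apply]
    rw [hfun, hval]; exact h
  refine ⟨part1, ?_⟩
  intro t ht
  set W : Matrix (Fin n) (Fin n) ℝ := (1/2:ℝ) • (A 0 - (A 0)ᵀ) with hWdef
  -- derivative of G = Fm * Sym * Em is zero
  have hGder : ∀ u ∈ Icc (0:ℝ) T, ∀ i j,
      HasDerivWithinAt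
        (fun v => (exp (((-2) * v) • W) * ((1/2:ℝ) • (A v + (A v)ᵀ)) * exp ((2 * v) • W)) i j)
        0 (Icc (0:ℝ) T) u := by
    intro u hu i j
    have hFd : ∀ i j, HasDerivWithinAt (fun v => exp (((-2) * v) • W) i j)
        (((-2:ℝ) • (exp (((-2) * u) • W) * W)) i j) (Icc (0:ℝ) T) u :=
      fun i j => (znc_exp_deriv W (-2) u i j).hasDerivWithinAt
    have hEd : ∀ i j, HasDerivWithinAt (fun v => exp ((2 * v) • W) i j)
        (((2:ℝ) • (exp ((2 * u) • W) * W)) i j) (Icc (0:ℝ) T) u :=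
      fun i j => (znc_exp_deriv W 2 u i j).hasDerivWithinAt
    have hFS := znc_hd_mul hFd (part1 u hu)
    have hG := znc_hd_mul hFS hEd i j
    have hzero : (((-2:ℝ) • (exp (((-2) * u) • W) * W)) * ((1/2:ℝ) • (A u + (A u)ᵀ)) +
          exp (((-2) * u) • W) *
            ((2 : ℝ) • (W * ((1/2:ℝ) • (A u + (A u)ᵀ)) - ((1/2:ℝ) • (A u + (A u)ᵀ)) * W))) *
          exp ((2 * u) • W) +
        (exp (((-2) * u) • W) * ((1/2:ℝ) • (A u + (A u)ᵀ))) *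
          ((2:ℝ) • (exp ((2 * u) • W) * W)) = 0 := by
      rw [znc_exp_commute W (2 * u)]
      simp only [smul_mul_assoc, mul_smul_comm, sub_mul, mul_sub, add_mul, mul_add,
        mul_assoc, smul_sub, smul_add, smul_smul, neg_smul, neg_mul, mul_neg]
      module
    rw [hzero] at hG
    simpa using hG
  -- G is constant
  have hGconst : ∀ u ∈ Icc (0:ℝ) T,
      exp (((-2) * u) • W) * ((1/2:ℝ) • (A u + (A u)ᵀ)) * exp ((2 * u) • W)
        = (1/2:ℝ) • (A 0 + (A 0)ᵀ) := by
    intro u hu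
    have h0 : exp (((-2) * (0:ℝ)) • W) * ((1/2:ℝ) • (A 0 + (A 0)ᵀ)) * exp ((2 * (0:ℝ)) • W)
        = (1/2:ℝ) • (A 0 + (A 0)ᵀ) := by
      norm_num [exp_zero]
    rw [← h0]
    ext i j
    exact znc_const hT
      (fun v => (exp (((-2) * v) • W) * ((1/2:ℝ) • (A v + (A v)ᵀ)) * exp ((2 * v) • W)) i j)
      (fun v hv => hGder v hv i j) u hu
  -- exp inverses
  have hcomm : Commute ((2 * t) • W) (((-2) * t) • W) :=
    ((Commute.refl W).smul_left _).smul_right _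
  have hEF : exp ((2 * t) • W) * exp (((-2) * t) • W) = 1 := by
    rw [← Matrix.exp_add_of_commute _ _ hcomm,
      show (2 * t) • W + ((-2) * t) • W = 0 by module, exp_zero]
  have hFE : exp (((-2) * t) • W) * exp ((2 * t) • W) = 1 := by
    rw [← Matrix.exp_add_of_commute _ _ hcomm.symm,
      show ((-2) * t) • W + (2 * t) • W = 0 by module, exp_zero]
  -- conclude
  have hSymt : (1/2:ℝ) • (A t + (A t)ᵀ)
      = exp ((2 * t) • W) * ((1/2:ℝ) • (A 0 + (A 0)ᵀ)) * exp (((-2) * t) • W) := by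
    have h := hGconst t ht
    calc (1/2:ℝ) • (A t + (A t)ᵀ)
        = (exp ((2 * t) • W) * exp (((-2) * t) • W)) * ((1/2:ℝ) • (A t + (A t)ᵀ)) *
            (exp ((2 * t) • W) * exp (((-2) * t) • W)) := by rw [hEF, one_mul, mul_one]
      _ = exp ((2 * t) • W) *
            (exp (((-2) * t) • W) * ((1/2:ℝ) • (A t + (A t)ᵀ)) * exp ((2 * t) • W)) *
            exp (((-2) * t) • W) := by noncomm_ring
      _ = exp ((2 * t) • W) * ((1/2:ℝ) • (A 0 + (A 0)ᵀ)) * exp (((-2) * t) • W) := by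
            rw [h]
  have hneg : (-(2 * t)) = (-2) * t := by ring
  rw [hneg, ← hSymt, ← hKconst t ht]
  module
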